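/- There exists a constant C ≥ 1 such that for every real R ≥ 1 and all real numbers x, y with |x| ≤ 1 and |y| ≤ 1, if max(|x|, |y|) ≥ e^{−R} or max(|y|, |x − y·log|y||) ≥ e^{−R}, then max(|y|, |x − y·log|y||) ≤ C·R·max(|x|, |y|) and max(|x|, |y|) ≤ C·R·max(|y|, |x − y·log|y||). Here log denotes the real logarithm with the convention y·log|y| = 0 when y = 0. -/
import Mathlib


open Real

private lemma core16 (m R : ℝ) (hm0 : 0 < m) (hm1 : m ≤ 1) (hR : 1 ≤ R)
    (h : Real.exp (-R) ≤ m * (2 - Real.log m)) : 2 - Real.log m ≤ 6 * R := by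
  set u := -Real.log m with hu
  have hu0 : 0 ≤ u := by
    rw [hu]
    simpa using Real.log_nonpos hm0.le hm1
  have hm : m = Real.exp (-u) := by rw [hu, neg_neg, Real.exp_log hm0]
  have h2 : Real.exp (u - R) ≤ 2 + u := by
    have h' : Real.exp (-R) ≤ Real.exp (-u) * (2 + u) := by
      have : Real.log m = -u := by rw [hu]; ring
      nlinarith [h, this, hm]
    have := mul_le_mul_of_nonneg_left h' (Real.exp_pos u).le
    calc Real.exp (u - R) = Real.exp u * Real.exp (-R) := by
          rw [← Real.exp_add]; ring_nf
      _ ≤ Real.exp u * (Real.exp (-u) * (2 + u)) := this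
      _ = 2 + u := by rw [← mul_assoc, ← Real.exp_add]; simp
  have h3 : u - R ≤ Real.log (2 + u) := by
    rw [Real.le_log_iff_exp_le (by linarith)]
    exact h2
  have h4 : Real.log (2 + u) ≤ 1 + u / 2 := by
    have hsplit : Real.log (2 + u) = Real.log 2 + Real.log ((2 + u) / 2) := by
      rw [← Real.log_mul (by norm_num) (by positivity)]
      ring_nf
    have h5 : Real.log ((2 + u) / 2) ≤ (2 + u) / 2 - 1 :=
      Real.log_le_sub_one_of_pos (by positivity)
    have h6 : Real.log 2 ≤ 1 := by
      have := Real.log_le_sub_one_of_pos (by norm_num : (0:ℝ) < 2)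
      linarith
    linarith
  linarith

private lemma gmono16 (t m : ℝ) (ht0 : 0 ≤ t) (htm : t ≤ m) (hm1 : m ≤ 1) :
    t * (-Real.log t) ≤ m * (1 - Real.log m) := by
  rcases eq_or_lt_of_le ht0 with h0 | h0
  · have hm0 : 0 ≤ m := le_trans ht0 htm
    have hlm : Real.log m ≤ 0 := Real.log_nonpos hm0 hm1
    rw [← h0]
    simp
    nlinarith
  · have hm0 : 0 < m := lt_of_lt_of_le h0 htm
    have hlm : Real.log m ≤ 0 := Real.log_nonpos hm0.le hm1
    have hsplit : Real.log (m / t) = Real.log m - Real.log t :=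
      Real.log_div hm0.ne' h0.ne'
    have hlog : Real.log (m / t) ≤ m / t - 1 :=
      Real.log_le_sub_one_of_pos (by positivity)
    have h1 : t * Real.log (m / t) ≤ m - t := by
      have h2 := mul_le_mul_of_nonneg_left hlog h0.le
      have h3 : t * (m / t - 1) = m - t := by field_simp
      linarith [h3 ▸ h2]
    have h4 : (m - t) * Real.log m ≤ 0 := mul_nonpos_of_nonneg_of_nonpos (by linarith) hlm
    nlinarith [hsplit, h1, h4]

theorem stmt_16 :
    ∃ C : ℝ, 1 ≤ C ∧
      ∀ R : ℝ, 1 ≤ R → ∀ x y : ℝ, |x| ≤ 1 → |y| ≤ 1 →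
        (Real.exp (-R) ≤ max |x| |y| ∨
          Real.exp (-R) ≤ max |y| (abs (x - y * Real.log |y|))) →
        max |y| (abs (x - y * Real.log |y|)) ≤ C * R * max |x| |y| ∧
          max |x| |y| ≤ C * R * max |y| (abs (x - y * Real.log |y|)) := by
  refine ⟨6, by norm_num, ?_⟩
  intro R hR x y hx hy hyp
  set L := abs (x - y * Real.log (abs y)) with hL
  set d := max |x| |y| with hd
  set d' := max |y| L with hd'
  have hyabs : abs (y * Real.log (abs y)) = |y| * (-Real.log |y|) := by
    rw [abs_mul, abs_of_nonpos (Real.log_nonpos (abs_nonneg y) hy)]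
  have hd1 : d ≤ 1 := max_le hx hy
  have hxd : |x| ≤ d := le_max_left _ _
  have hyd : |y| ≤ d := le_max_right _ _
  have hyd' : |y| ≤ d' := le_max_left _ _
  have hLd' : L ≤ d' := le_max_right _ _
  by_cases hd0 : d = 0
  · exfalso
    have hax : |x| = 0 := le_antisymm (hd0 ▸ hxd) (abs_nonneg x)
    have hay : |y| = 0 := le_antisymm (hd0 ▸ hyd) (abs_nonneg y)
    have hx0 : x = 0 := abs_eq_zero.mp hax
    have hy0 : y = 0 := abs_eq_zero.mp hay
    have : Real.exp (-R) ≤ 0 := by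
      rcases hyp with h | h
      · rw [hd] at h; simpa [hx0, hy0] using h
      · rw [hd', hL] at h; simpa [hx0, hy0] using h
    exact absurd this (not_le.mpr (Real.exp_pos _))
  have hdpos : 0 < d := lt_of_le_of_ne (le_max_of_le_left (abs_nonneg x)) (Ne.symm hd0)
  have hldd : Real.log d ≤ 0 := Real.log_nonpos hdpos.le hd1
  -- Direction 1 : d' ≤ d * (2 - log d)
  have key1 : d' ≤ d * (2 - Real.log d) := by
    have hg : |y| * (-Real.log |y|) ≤ d * (1 - Real.log d) :=
      gmono16 |y| d (abs_nonneg y) hyd hd1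
    have hLb : L ≤ |x| + abs (y * Real.log (abs y)) := by
      rw [hL]
      exact abs_sub _ _
    have h1 : L ≤ d * (2 - Real.log d) := by
      rw [hyabs] at hLb
      nlinarith
    have h2 : |y| ≤ d * (2 - Real.log d) := by nlinarith
    exact max_le h2 h1
  have hexp1 : Real.exp (-R) ≤ d * (2 - Real.log d) := by
    rcases hyp with h | h
    · have : d ≤ d * (2 - Real.log d) := by nlinarith
      exact le_trans h this
    · exact le_trans h key1
  have h6 : 2 - Real.log d ≤ 6 * R := core16 d R hdpos hd1 hR hexp1
  constructor
  · calc d' ≤ d * (2 - Real.log d) := key1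
      _ ≤ 6 * R * d := by nlinarith
  -- Direction 2
  by_cases hd'1 : d' ≤ 1
  · have hd'pos : 0 < d' := by
      rcases lt_or_eq_of_le (le_trans (abs_nonneg y) hyd') with h | h
      · exact h
      · exfalso
        have hay : |y| = 0 := le_antisymm (h ▸ hyd') (abs_nonneg y)
        have haL : L = 0 := le_antisymm (h ▸ hLd') (abs_nonneg _)
        have hy0 : y = 0 := abs_eq_zero.mp hay
        have hx0 : x = 0 := by
          have := haL
          rw [hL, hy0] at this
          simpa using abs_eq_zero.mp this
        exact hd0 (by rw [hd, hx0, hy0]; simp)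
    have hld' : Real.log d' ≤ 0 := Real.log_nonpos hd'pos.le hd'1
    have key2 : d ≤ d' * (2 - Real.log d') := by
      have hg : |y| * (-Real.log |y|) ≤ d' * (1 - Real.log d') :=
        gmono16 |y| d' (abs_nonneg y) hyd' hd'1
      have hxb : |x| ≤ L + abs (y * Real.log (abs y)) := by
        rw [hL]
        have h := abs_add_le (x - y * Real.log (abs y)) (y * Real.log (abs y))
        simpa using h
      have h1 : |x| ≤ d' * (2 - Real.log d') := by
        rw [hyabs] at hxb
        nlinarith
      have h2 : |y| ≤ d' * (2 - Real.log d') := by nlinarith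
      exact max_le h1 h2
    have hexp2 : Real.exp (-R) ≤ d' * (2 - Real.log d') := by
      rcases hyp with h | h
      · exact le_trans h key2
      · have : d' ≤ d' * (2 - Real.log d') := by nlinarith
        exact le_trans h this
    have h6' : 2 - Real.log d' ≤ 6 * R := core16 d' R hd'pos hd'1 hR hexp2
    calc d ≤ d' * (2 - Real.log d') := key2
      _ ≤ 6 * R * d' := by nlinarith
  · push_neg at hd'1
    calc d ≤ 1 := hd1
      _ ≤ d' := hd'1.le
      _ ≤ 6 * R * d' := by nlinarith
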